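/- arXiv:1110.3879 — 2 statements merged into one kernel-verified Lean document; each statement's English description precedes it below -/
import Mathlib

section
/- If a transformation sequence s' contains only edge rules and its length is strictly greater than the number of distinct edges of its union graph, then there exist two rules in s' acting on the same edge; consequently the map P₂ (removing the last such duplicated rule) is well-defined on such sequences. -/
/-- A transformation rule (TR): either a vertex rule (vi/vd/vr, distinguished by `kind`)
acting on a vertex ID `u`, or an edge rule (ei/ed/er) acting on a pair of vertex IDs,
with label `l` and interstate index `j`. -/
inductive Rule (V L : Type) where
  | vertex (kind : ℕ) (u : V) (l : L) (j : ℕ)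
  | edge   (kind : ℕ) (u u' : V) (l : L) (j : ℕ)

variable {V L : Type}

def Rule.isVertexRule : Rule V L → Prop
  | .vertex _ _ _ _ => True
  | .edge _ _ _ _ _ => False

def Rule.edgeOf : Rule V L → Option (V × V)
  | .vertex _ _ _ _ => none
  | .edge _ u u' _ _ => some (u, u')

/-- Translate a rule by a map `φ` on interstate indices and a map `ψ` on vertex IDs. -/
def mapRule (φ : ℕ → ℕ) (ψ : V → V) : Rule V L → Rule V L
  | .vertex k u l j => .vertex k (ψ u) l (φ j)
  | .edge k u u' l j => .edge k (ψ u) (ψ u') l (φ j)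

/-- `Subseq sp sd`: `sp ⊑ sd` via a strictly increasing map on interstate indices and an
injective map on vertex IDs. -/
def Subseq (sp sd : List (Rule V L)) : Prop :=
  ∃ φ : ℕ → ℕ, StrictMono φ ∧ ∃ ψ : V → V, Function.Injective ψ ∧
    ∀ r ∈ sp, mapRule φ ψ r ∈ sd

/-- Vertex IDs occurring in the rules of `s` (the vertex set of the union graph). -/
def vertsOf (s : List (Rule V L)) : Set V :=
  {u | (∃ k l j, Rule.vertex k u l j ∈ s) ∨ (∃ k u' l j, Rule.edge k u u' l j ∈ s) ∨
       (∃ k u' l j, Rule.edge k u' u l j ∈ s)}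

/-- Pairs of vertex IDs acted on by edge rules of `s` (the edge set of the union graph). -/
def edgePairs (s : List (Rule V L)) : Set (V × V) :=
  {p | ∃ k l j, Rule.edge k p.1 p.2 l j ∈ s}

/-- The union graph of a transformation sequence, as a simple graph on all of `V`. -/
def unionGraph (s : List (Rule V L)) : SimpleGraph V :=
  SimpleGraph.fromEdgeSet {e | ∃ p ∈ edgePairs s, e = Sym2.mk p.1 p.2}

/-- A transformation sequence is relevant iff its union graph (induced on its vertex IDs)
is connected. -/
def Relevant (s : List (Rule V L)) : Prop :=
  ((unionGraph s).induce (vertsOf s)).Connected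

/-- The support of a transformation sequence in a database of graph sequences, each
represented by its transformation sequence. -/
noncomputable def support (DB : Finset (ℕ × List (Rule V L))) (s : List (Rule V L)) : ℕ :=
  Set.ncard {gid | ∃ sd, (gid, sd) ∈ DB ∧ Subseq s sd}

/-- pigeonhole: if a transformation sequence `s` contains only edge rules
and its length strictly exceeds the number of distinct edges of its union graph, then two
rules of `s` act on the same edge; hence `P₂` is well-defined on such sequences. -/
theorem exists_duplicated_edge_rule (s : List (Rule V L))
    (hedge : ∀ r ∈ s, ¬ r.isVertexRule)
    (hlen : (edgePairs s).ncard < s.length) :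
    ∃ i j : Fin s.length, i ≠ j ∧ (s.get i).edgeOf = (s.get j).edgeOf := by
  classical
  have hfin : (edgePairs s).Finite := by
    apply Set.Finite.subset (s.filterMap Rule.edgeOf).toFinset.finite_toSet
    rintro p ⟨k, l, j, hm⟩
    simp only [Finset.coe_sort_coe, List.coe_toFinset, Set.mem_setOf_eq, List.mem_filterMap]
    exact ⟨_, hm, rfl⟩
  have hmaps : ∀ i : Fin s.length, (s.get i).edgeOf ∈ Option.some '' edgePairs s := by
    intro i
    have hmem : s.get i ∈ s := List.get_mem s i
    cases h : s.get i with
    | vertex k u l j =>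
      rw [h] at hmem
      exact absurd trivial (hedge _ hmem)
    | edge k u u' l j =>
      rw [h] at hmem
      exact ⟨(u, u'), ⟨k, l, j, hmem⟩, rfl⟩
  have hcard : (Option.some '' edgePairs s).ncard < (Set.univ : Set (Fin s.length)).ncard := by
    rw [Set.ncard_image_of_injective _ (Option.some_injective _), Set.ncard_univ,
      Nat.card_eq_fintype_card, Fintype.card_fin]
    exact hlen
  obtain ⟨i, -, j, -, hne, heq⟩ := Set.exists_ne_map_eq_of_ncard_lt_of_maps_to hcard
    (fun i _ => hmaps i) (hfin.image _)
  exact ⟨i, j, hne, heq⟩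
end

section
/- If s is a relevant transformation sequence and s' is obtained from s by removing the last vertex rule (operation P₁), then s' ⊑ s and the union graph of s' equals that of s, hence σ(s') ≥ σ(s) for any database. -/
variable {V L : Type}

lemma mapRule_id (r : Rule V L) : mapRule id id r = r := by cases r <;> rfl

/-- if `s = s₁ ++ r :: s₂` is a relevant transformation sequence (of length
greater than 1, as required for `P₁`) and `s' = s₁ ++ s₂` is obtained from `s` by removing
its last vertex rule `r` (operation `P₁`), then `s' ⊑ s` and the union graph of `s'`
equals that of `s`; hence `σ(s') ≥ σ(s)` for any database. -/
theorem P1_subseq_and_support (s₁ s₂ : List (Rule V L)) (r : Rule V L)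
    (hr : r.isVertexRule) (hlast : ∀ r' ∈ s₂, ¬ r'.isVertexRule)
    (hrel : Relevant (s₁ ++ r :: s₂)) (hlen : 1 < (s₁ ++ r :: s₂).length) :
    Subseq (s₁ ++ s₂) (s₁ ++ r :: s₂) ∧
    vertsOf (s₁ ++ s₂) = vertsOf (s₁ ++ r :: s₂) ∧
    edgePairs (s₁ ++ s₂) = edgePairs (s₁ ++ r :: s₂) ∧
    ∀ DB : Finset (ℕ × List (Rule V L)),
      support DB (s₁ ++ r :: s₂) ≤ support DB (s₁ ++ s₂) := by
  obtain ⟨k0, u0, l0, j0, rfl⟩ : ∃ k u l j, r = Rule.vertex k u l j := by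
    cases r with
    | vertex k u l j => exact ⟨k, u, l, j, rfl⟩
    | edge => exact absurd hr (by simp [Rule.isVertexRule])
  set r := (Rule.vertex k0 u0 l0 j0 : Rule V L) with hrdef
  -- membership transfer
  have hmem : ∀ r' : Rule V L, r' ∈ s₁ ++ s₂ → r' ∈ s₁ ++ r :: s₂ := by
    intro r' h
    simp only [List.mem_append, List.mem_cons] at h ⊢
    tauto
  -- edgePairs equality
  have hE : edgePairs (s₁ ++ s₂) = edgePairs (s₁ ++ r :: s₂) := by
    ext p
    constructor
    · rintro ⟨k, l, j, h⟩
      exact ⟨k, l, j, hmem _ h⟩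
    · rintro ⟨k, l, j, h⟩
      refine ⟨k, l, j, ?_⟩
      simp only [List.mem_append, List.mem_cons] at h ⊢
      rcases h with h | h | h
      · tauto
      · exact absurd h (by simp [hrdef])
      · tauto
  -- subseq
  have hsub : Subseq (s₁ ++ s₂) (s₁ ++ r :: s₂) :=
    ⟨id, strictMono_id, id, Function.injective_id,
      fun r' h => by rw [mapRule_id]; exact hmem _ h⟩
  -- vertsOf equality
  have hVsub : ∀ u, u ∈ vertsOf (s₁ ++ s₂) → u ∈ vertsOf (s₁ ++ r :: s₂) := by
    intro u h
    rcases h with ⟨k, l, j, h⟩ | ⟨k, u', l, j, h⟩ | ⟨k, u', l, j, h⟩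
    · exact Or.inl ⟨k, l, j, hmem _ h⟩
    · exact Or.inr (Or.inl ⟨k, u', l, j, hmem _ h⟩)
    · exact Or.inr (Or.inr ⟨k, u', l, j, hmem _ h⟩)
  -- nonemptiness of s₁ ++ s₂
  have hne : s₁ ++ s₂ ≠ [] := by
    intro h
    rcases List.append_eq_nil_iff.mp h with ⟨h1, h2⟩
    subst h1; subst h2
    simp at hlen
  obtain ⟨r0, hr0⟩ : ∃ r0, r0 ∈ s₁ ++ s₂ := List.exists_mem_of_ne_nil _ hne
  have hv' : ∃ v, v ∈ vertsOf (s₁ ++ s₂) := by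
    cases r0 with
    | vertex k u l j => exact ⟨u, Or.inl ⟨k, l, j, hr0⟩⟩
    | edge k u u' l j => exact ⟨u, Or.inr (Or.inl ⟨k, u', l, j, hr0⟩)⟩
  obtain ⟨v, hv⟩ := hv'
  have hvS : v ∈ vertsOf (s₁ ++ r :: s₂) := hVsub v hv
  -- key: every vertex of s is a vertex of s'
  have hVsup : ∀ u, u ∈ vertsOf (s₁ ++ r :: s₂) → u ∈ vertsOf (s₁ ++ s₂) := by
    intro u hu
    -- first handle vertices coming from edge rules
    have hedge : ∀ p ∈ edgePairs (s₁ ++ s₂), u = p.1 ∨ u = p.2 →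
        u ∈ vertsOf (s₁ ++ s₂) := by
      rintro p ⟨k, l, j, hp⟩ (h1 | h2)
      · exact Or.inr (Or.inl ⟨k, p.2, l, j, h1 ▸ hp⟩)
      · exact Or.inr (Or.inr ⟨k, p.1, l, j, h2 ▸ hp⟩)
    rcases hu with ⟨k, l, j, h⟩ | ⟨k, u', l, j, h⟩ | ⟨k, u', l, j, h⟩
    · -- vertex rule
      simp only [List.mem_append, List.mem_cons] at h
      rcases h with h | h | h
      · exact Or.inl ⟨k, l, j, List.mem_append_left _ h⟩
      · -- the removed rule itself: use connectivity
        have huS : u ∈ vertsOf (s₁ ++ r :: s₂) := Or.inl ⟨k, l, j, by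
          simp [List.mem_append, List.mem_cons, h]⟩
        have hreach := hrel.preconnected ⟨u, huS⟩ ⟨v, hvS⟩
        obtain ⟨w⟩ := hreach
        cases w with
        | nil => exact hv
        | @cons _ c _ hadj p =>
          have hadj' : (unionGraph (s₁ ++ r :: s₂)).Adj u c.1 := hadj
          rw [unionGraph, SimpleGraph.fromEdgeSet_adj] at hadj'
          obtain ⟨⟨q, hq, hqe⟩, hne'⟩ := hadj'
          rw [← hE] at hq
          replace hqe := (Sym2.mk_eq_mk_iff (p := (u, c.1)) (q := q)).mp hqe
          rcases hqe with hqe | hqe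
          · exact hedge q hq (Or.inl (congrArg Prod.fst hqe))
          · exact hedge q hq (Or.inr (by simpa using congrArg Prod.fst hqe))
      · exact Or.inl ⟨k, l, j, List.mem_append_right _ h⟩
    · -- edge rules can't be r
      have : Rule.edge k u u' l j ∈ s₁ ++ s₂ := by
        simp only [List.mem_append, List.mem_cons] at h ⊢
        rcases h with h | h | h
        · tauto
        · exact absurd h (by simp [hrdef])
        · tauto
      exact Or.inr (Or.inl ⟨k, u', l, j, this⟩)
    · have : Rule.edge k u' u l j ∈ s₁ ++ s₂ := by
        simp only [List.mem_append, List.mem_cons] at h ⊢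
        rcases h with h | h | h
        · tauto
        · exact absurd h (by simp [hrdef])
        · tauto
      exact Or.inr (Or.inr ⟨k, u', l, j, this⟩)
  have hV : vertsOf (s₁ ++ s₂) = vertsOf (s₁ ++ r :: s₂) :=
    Set.eq_of_subset_of_subset hVsub hVsup
  refine ⟨hsub, hV, hE, ?_⟩
  intro DB
  apply Set.ncard_le_ncard
  · rintro gid ⟨sd, hmemdb, φ, hφ, ψ, hψ, hall⟩
    exact ⟨sd, hmemdb, φ, hφ, ψ, hψ, fun r' h => hall _ (hmem _ h)⟩
  · apply Set.Finite.subset (DB.image Prod.fst).finite_toSet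
    rintro gid ⟨sd, hmemdb, _⟩
    exact Finset.mem_image_of_mem Prod.fst hmemdb
end
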